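/- For m=0, M=1, the partial derivative ∂B/∂x₃ equals x₁²/[1-2a(1-x₃)]², and in particular ∂B/∂x₃(x) ≥ x₁² for all x in the domain {x₁² ≤ x₂, 0 < x₃ ≤ 1}. -/

import Mathlib

/-- For m=0, M=1, the partial derivative ∂B/∂x₃ equals
x₁²/[1-2a(1-x₃)]² (with a the implicitly defined root of the cubic), and in particular
∂B/∂x₃ ≥ x₁² on the domain {x₁² ≤ x₂, 0 < x₃ ≤ 1}. -/
theorem stmt9 (x₁ x₂ x₃ a' : ℝ) (hx2 : 0 < x₂) (hx12 : x₁^2 ≤ x₂)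
    (hx3 : 0 < x₃) (hx3' : x₃ < 1)
    (a : ℝ → ℝ)
    (haI : ∀ y ∈ Set.Ioc (0:ℝ) 1, a y ∈ Set.Ico (0:ℝ) (1/4))
    (ha : ∀ y ∈ Set.Ioc (0:ℝ) 1, x₁^2/x₂ =
      ((1 - 2*(a y)*(1 - y))/(1 - 2*(a y)))^2 * ((1 - 4*(a y))/(1 - 4*(a y)*(1 - y))))
    (hda : HasDerivAt a a' x₃) :
    HasDerivAt (fun y => y*x₂/((1 - 2*(a y))^2*(1 - 4*(a y)*(1 - y))))
      (x₁^2/(1 - 2*(a x₃)*(1 - x₃))^2) x₃ ∧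
    ∀ y ∈ Set.Ioc (0:ℝ) 1, x₁^2 ≤ x₁^2/(1 - 2*(a y)*(1 - y))^2 := by
  have hx2' : x₂ ≠ 0 := hx2.ne'
  have hpos : ∀ y ∈ Set.Ioc (0:ℝ) 1, 0 < 1 - 2*(a y) ∧ 0 < 1 - 4*(a y) ∧
      0 < 1 - 4*(a y)*(1-y) ∧ 0 < 1 - 2*(a y)*(1-y) := by
    intro y hy
    obtain ⟨h0, h4⟩ := haI y hy
    have hy0 : 0 ≤ 1 - y := by linarith [hy.2]
    have h1 : (a y)*(1-y) ≤ a y := by nlinarith [hy.1]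
    have h2 : 0 ≤ (a y)*(1-y) := mul_nonneg h0 hy0
    refine ⟨by linarith, by linarith, by linarith, by linarith⟩
  have part2 : ∀ y ∈ Set.Ioc (0:ℝ) 1, x₁^2 ≤ x₁^2/(1 - 2*(a y)*(1 - y))^2 := by
    intro y hy
    obtain ⟨-, -, -, hu⟩ := hpos y hy
    obtain ⟨h0, h4⟩ := haI y hy
    have h2 : 0 < (1 - 2*(a y)*(1-y))^2 := by positivity
    have h3 : 0 ≤ (a y)*(1-y) := mul_nonneg h0 (by linarith [hy.2])
    have hu1 : (1 - 2*(a y)*(1-y))^2 ≤ 1 := by nlinarith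
    rw [le_div_iff₀ h2]
    nlinarith [sq_nonneg x₁]
  refine ⟨?_, part2⟩
  have hx3mem : x₃ ∈ Set.Ioc (0:ℝ) 1 := ⟨hx3, hx3'.le⟩
  obtain ⟨hv, hw, hz, hu⟩ := hpos x₃ hx3mem
  have hmem : Set.Ioo (0:ℝ) 1 ∈ nhds x₃ := isOpen_Ioo.mem_nhds ⟨hx3, hx3'⟩
  -- basic derivatives
  have h1y : HasDerivAt (fun y : ℝ => 1 - y) (-1) x₃ := by
    simpa using (hasDerivAt_id x₃).const_sub 1
  have hU : HasDerivAt (fun y => 1 - 2*(a y)*(1 - y)) (2*(a x₃) - 2*a'*(1-x₃)) x₃ := by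
    have := ((hda.const_mul 2).mul h1y).const_sub 1
    refine this.congr_deriv ?_; ring
  have hV : HasDerivAt (fun y => 1 - 2*(a y)) (-(2*a')) x₃ := by
    have := (hda.const_mul 2).const_sub 1
    refine this.congr_deriv ?_; ring
  have hW : HasDerivAt (fun y => 1 - 4*(a y)) (-(4*a')) x₃ := by
    have := (hda.const_mul 4).const_sub 1
    refine this.congr_deriv ?_; ring
  have hZ : HasDerivAt (fun y => 1 - 4*(a y)*(1 - y)) (4*(a x₃) - 4*a'*(1-x₃)) x₃ := by
    have := ((hda.const_mul 4).mul h1y).const_sub 1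
    refine this.congr_deriv ?_; ring
  -- derivative of the denominator Q
  have hQ : HasDerivAt (fun y => (1 - 2*(a y))^2*(1 - 4*(a y)*(1 - y)))
      ((-(4*a'))*(1-2*(a x₃))*(1-4*(a x₃)*(1-x₃))
        + (1-2*(a x₃))^2*(4*(a x₃) - 4*a'*(1-x₃))) x₃ := by
    have := (hV.pow 2).mul hZ
    refine this.congr_deriv ?_; simp only [Pi.pow_apply]; ring
  have hQne : (1 - 2*(a x₃))^2*(1 - 4*(a x₃)*(1-x₃)) ≠ 0 := by positivity
  have hB : HasDerivAt (fun y => y*x₂/((1 - 2*(a y))^2*(1 - 4*(a y)*(1 - y))))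
      ((x₂*((1 - 2*(a x₃))^2*(1 - 4*(a x₃)*(1-x₃)))
        - x₃*x₂*((-(4*a'))*(1-2*(a x₃))*(1-4*(a x₃)*(1-x₃))
          + (1-2*(a x₃))^2*(4*(a x₃) - 4*a'*(1-x₃))))
        /((1 - 2*(a x₃))^2*(1 - 4*(a x₃)*(1-x₃)))^2) x₃ := by
    have hnum : HasDerivAt (fun y : ℝ => y*x₂) x₂ x₃ := by
      simpa using (hasDerivAt_id x₃).mul_const x₂
    have := hnum.div hQ hQne
    refine this.congr_deriv ?_; ring
  -- the implicit relation, differentiated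
  have hF : HasDerivAt (fun y => (1 - 2*(a y)*(1 - y))^2*(1 - 4*(a y))
      - x₁^2/x₂*((1 - 2*(a y))^2*(1 - 4*(a y)*(1 - y))))
      (2*(1-2*(a x₃)*(1-x₃))*(2*(a x₃) - 2*a'*(1-x₃))*(1-4*(a x₃))
        + (1-2*(a x₃)*(1-x₃))^2*(-(4*a'))
        - x₁^2/x₂*((-(4*a'))*(1-2*(a x₃))*(1-4*(a x₃)*(1-x₃))
          + (1-2*(a x₃))^2*(4*(a x₃) - 4*a'*(1-x₃)))) x₃ := by
    have := ((hU.pow 2).mul hW).sub (((hV.pow 2).mul hZ).const_mul (x₁^2/x₂))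
    refine this.congr_deriv ?_; simp only [Pi.pow_apply]; ring
  have hFev : (fun y => (1 - 2*(a y)*(1 - y))^2*(1 - 4*(a y))
      - x₁^2/x₂*((1 - 2*(a y))^2*(1 - 4*(a y)*(1 - y)))) =ᶠ[nhds x₃] fun _ => (0:ℝ) := by
    filter_upwards [hmem] with y hy
    have hy' : y ∈ Set.Ioc (0:ℝ) 1 := ⟨hy.1, hy.2.le⟩
    obtain ⟨hv', hw', hz', hu'⟩ := hpos y hy'
    rw [ha y hy']
    rw [div_pow, div_mul_div_comm, div_mul_cancel₀ _ (by positivity)]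
    ring
  have hF0 : HasDerivAt (fun y => (1 - 2*(a y)*(1 - y))^2*(1 - 4*(a y))
      - x₁^2/x₂*((1 - 2*(a y))^2*(1 - 4*(a y)*(1 - y)))) 0 x₃ :=
    (hasDerivAt_const x₃ (0:ℝ)).congr_of_eventuallyEq hFev
  have hDF0 : (2*(1-2*(a x₃)*(1-x₃))*(2*(a x₃) - 2*a'*(1-x₃))*(1-4*(a x₃))
        + (1-2*(a x₃)*(1-x₃))^2*(-(4*a'))
        - x₁^2/x₂*((-(4*a'))*(1-2*(a x₃))*(1-4*(a x₃)*(1-x₃))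
          + (1-2*(a x₃))^2*(4*(a x₃) - 4*a'*(1-x₃)))) = 0 := hF.unique hF0
  -- the relation at x₃ with denominators cleared
  have hcx := ha x₃ hx3mem
  have hc' : x₁^2*((1-2*(a x₃))^2*(1-4*(a x₃)*(1-x₃)))
      = x₂*((1-2*(a x₃)*(1-x₃))^2*(1-4*(a x₃))) := by
    rw [div_pow, div_mul_div_comm, div_eq_div_iff hx2' (by positivity)] at hcx
    linear_combination hcx
  -- cleared version of hDF0
  have hDFpoly : x₂*(2*(1-2*(a x₃)*(1-x₃))*(2*(a x₃) - 2*a'*(1-x₃))*(1-4*(a x₃))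
        + (1-2*(a x₃)*(1-x₃))^2*(-(4*a')))
      = x₁^2*((-(4*a'))*(1-2*(a x₃))*(1-4*(a x₃)*(1-x₃))
          + (1-2*(a x₃))^2*(4*(a x₃) - 4*a'*(1-x₃))) := by
    have h := hDF0
    field_simp at h
    linear_combination h
  -- the key identity
  have hkey : (1-x₃)*(1-2*(a x₃))*(1-4*(a x₃))*((a x₃) - a'*(1-x₃))
      + a'*(1-2*(a x₃)*(1-x₃))*(1-4*(a x₃)*(1-x₃)) = 0 := by
    by_cases hα : a x₃ = 0
    · have haz : ∀ y ∈ Set.Ioo (0:ℝ) 1, a y = 0 := by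
        intro y hy
        have hy' : y ∈ Set.Ioc (0:ℝ) 1 := ⟨hy.1, hy.2.le⟩
        obtain ⟨hv', hw', hz', hu'⟩ := hpos y hy'
        obtain ⟨h0, h4⟩ := haI y hy'
        have h1 : x₁^2/x₂ = 1 := by rw [ha x₃ hx3mem, hα]; norm_num
        have h2 := ha y hy'
        rw [h1] at h2
        have h3 : (1 - 2*(a y))^2*(1 - 4*(a y)*(1-y))
            = (1 - 2*(a y)*(1-y))^2*(1 - 4*(a y)) := by
          rw [div_pow, div_mul_div_comm, eq_div_iff (by positivity)] at h2
          linear_combination h2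
        have h4' : (a y)^2 * (y*(2 - y - 4*(a y)*(1-y))) = 0 := by
          linear_combination ((1:ℝ)/4)*h3
        have h5 : 0 < y*(2 - y - 4*(a y)*(1-y)) := by
          have h6 : 4*(a y)*(1-y) ≤ 1-y := by nlinarith [hy.2]
          have h7 : 0 < 2 - y - 4*(a y)*(1-y) := by linarith [hy.2]
          exact mul_pos hy.1 h7
        have h6 : (a y)^2 = 0 := by
          rcases mul_eq_zero.mp h4' with h|h
          · exact h
          · exact absurd h h5.ne'
        exact pow_eq_zero_iff (two_ne_zero) |>.mp h6
      have ha'0 : a' = 0 := by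
        have hev2 : a =ᶠ[nhds x₃] fun _ => (0:ℝ) := by
          filter_upwards [hmem] with y hy using haz y hy
        exact hda.unique ((hasDerivAt_const x₃ (0:ℝ)).congr_of_eventuallyEq hev2)
      rw [hα, ha'0]; ring
    · have h8 : x₂ * ((1-2*(a x₃)*(1-x₃)) * ((a x₃) *
          ((1-x₃)*(1-2*(a x₃))*(1-4*(a x₃))*((a x₃) - a'*(1-x₃))
            + a'*(1-2*(a x₃)*(1-x₃))*(1-4*(a x₃)*(1-x₃))))) = 0 := by
        linear_combination (-(1:ℝ)/8)*((1-2*(a x₃))*(1-4*(a x₃)*(1-x₃)))*hDFpoly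
          + (-(1:ℝ)/8)*((-(4*a'))*(1-4*(a x₃)*(1-x₃))
            + (1-2*(a x₃))*(4*(a x₃) - 4*a'*(1-x₃)))*hc'
      have h9 := (mul_eq_zero.mp h8).resolve_left hx2'
      have h10 := (mul_eq_zero.mp h9).resolve_left hu.ne'
      exact (mul_eq_zero.mp h10).resolve_left hα
  -- finish
  have heq : (x₂*((1 - 2*(a x₃))^2*(1 - 4*(a x₃)*(1-x₃)))
        - x₃*x₂*((-(4*a'))*(1-2*(a x₃))*(1-4*(a x₃)*(1-x₃))
          + (1-2*(a x₃))^2*(4*(a x₃) - 4*a'*(1-x₃))))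
        /((1 - 2*(a x₃))^2*(1 - 4*(a x₃)*(1-x₃)))^2
      = x₁^2/(1 - 2*(a x₃)*(1 - x₃))^2 := by
    have hd1 : ((1 - 2*(a x₃))^2*(1 - 4*(a x₃)*(1-x₃)))^2 ≠ 0 := pow_ne_zero 2 hQne
    have hd2 : (1 - 2*(a x₃)*(1 - x₃))^2 ≠ 0 := pow_ne_zero 2 hu.ne'
    rw [div_eq_div_iff hd1 hd2]
    linear_combination (4:ℝ)*x₂*(1-2*(a x₃)*(1-x₃))^2*(1-2*(a x₃))*hkey
      - ((1-2*(a x₃))^2*(1-4*(a x₃)*(1-x₃)))*hc'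
  exact heq ▸ hB
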